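/- arXiv:0710.3655 — 3 statements merged into one kernel-verified Lean document; each statement's English description precedes it below -/
import Mathlib

section
/- A measurable set G ⊆ ℝ is a 2-dilation generator of a partition of ℝ (the sets 2^n G, n ∈ ℤ, are disjoint and ℝ \ ⋃_n 2^n G is null) if and only if G is, modulo a null set, dilation congruent modulo 2 to [−2π, −π) ∪ [π, 2π). -/
open MeasureTheory

/-- `P` is a measurable partition (modulo null sets) of `E`, indexed by `ℤ`. -/
def IsMeasPartitionZ (P : ℤ → Set ℝ) (E : Set ℝ) : Prop :=
  (∀ n, MeasurableSet (P n)) ∧ (∀ m n : ℤ, m ≠ n → volume (P m ∩ P n) = 0) ∧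
    volume (symmDiff (⋃ n, P n) E) = 0

/-- `G` and `H` are dilation congruent modulo 2: there is a measurable partition {Gₙ} of G
such that {2ⁿ Gₙ} is a measurable partition of H (modulo null sets). -/
def DilCongr2 (G H : Set ℝ) : Prop :=
  ∃ P : ℤ → Set ℝ, IsMeasPartitionZ P G ∧
    IsMeasPartitionZ (fun n => (fun x => (2 : ℝ) ^ n * x) '' P n) H

noncomputable section Helpers

local notation "π" => Real.pi

def dimg (n : ℤ) (A : Set ℝ) : Set ℝ := (fun x => (2 : ℝ) ^ n * x) '' A

lemma dimg_cancel (n : ℤ) (x : ℝ) : (2 : ℝ) ^ (-n) * ((2 : ℝ) ^ n * x) = x := by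
  rw [← mul_assoc, ← zpow_add₀ (two_ne_zero (α := ℝ))]; simp

lemma dimg_cancel' (n : ℤ) (x : ℝ) : (2 : ℝ) ^ n * ((2 : ℝ) ^ (-n) * x) = x := by
  rw [← mul_assoc, ← zpow_add₀ (two_ne_zero (α := ℝ))]; simp

lemma dimg_eq_preimage (n : ℤ) (A : Set ℝ) :
    dimg n A = (fun x => (2 : ℝ) ^ (-n) * x) ⁻¹' A := by
  ext y
  constructor
  · rintro ⟨x, hx, rfl⟩
    show (2 : ℝ) ^ (-n) * ((2 : ℝ) ^ n * x) ∈ A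
    rw [dimg_cancel]; exact hx
  · intro hy
    exact ⟨(2 : ℝ) ^ (-n) * y, hy, dimg_cancel' n y⟩

lemma mem_dimg {n : ℤ} {A : Set ℝ} {x : ℝ} : x ∈ dimg n A ↔ (2 : ℝ) ^ (-n) * x ∈ A := by
  rw [dimg_eq_preimage]; rfl

lemma measurableSet_dimg {A : Set ℝ} (hA : MeasurableSet A) (n : ℤ) :
    MeasurableSet (dimg n A) := by
  rw [dimg_eq_preimage]
  exact hA.preimage (measurable_const_mul _)

lemma volume_dimg_zero {A : Set ℝ} (hA : volume A = 0) (n : ℤ) : volume (dimg n A) = 0 := by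
  rw [dimg_eq_preimage,
    Real.volume_preimage_mul_left (a := (2:ℝ)^(-n)) (zpow_ne_zero _ (two_ne_zero)) A, hA,
    mul_zero]

lemma dimg_dimg (m n : ℤ) (A : Set ℝ) : dimg m (dimg n A) = dimg (m + n) A := by
  unfold dimg
  rw [Set.image_image]
  apply Set.image_congr'
  intro x
  rw [← mul_assoc, ← zpow_add₀ (two_ne_zero (α := ℝ))]

lemma dimg_zero (A : Set ℝ) : dimg 0 A = A := by
  simp [dimg]

lemma dimg_mono {A B : Set ℝ} (h : A ⊆ B) (n : ℤ) : dimg n A ⊆ dimg n B :=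
  Set.image_mono h

lemma dimg_inter (n : ℤ) (A B : Set ℝ) : dimg n (A ∩ B) = dimg n A ∩ dimg n B :=
  Set.image_inter (mul_right_injective₀ (zpow_ne_zero n (two_ne_zero)))

def SS : Set ℝ := Set.Ico (-(2 * π)) (-π) ∪ Set.Ico π (2 * π)

lemma measurableSet_SS : MeasurableSet SS :=
  (measurableSet_Ico).union measurableSet_Ico

lemma mem_dimg_SS {n : ℤ} {x : ℝ} :
    x ∈ dimg n SS ↔
      (-((2:ℝ) ^ (n+1) * π) ≤ x ∧ x < -((2:ℝ) ^ n * π)) ∨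
      ((2:ℝ) ^ n * π ≤ x ∧ x < (2:ℝ) ^ (n+1) * π) := by
  have ha : (0 : ℝ) < (2:ℝ) ^ n := zpow_pos two_pos n
  have hb : (0 : ℝ) < (2:ℝ) ^ (-n) := zpow_pos two_pos (-n)
  have hab : (2:ℝ) ^ n * (2:ℝ) ^ (-n) = 1 := by
    rw [← zpow_add₀ (two_ne_zero (α := ℝ))]; simp
  have h1 : ((2:ℝ) ^ (n+1)) = 2 * (2:ℝ) ^ n := by
    rw [zpow_add₀ (two_ne_zero (α := ℝ))]; ring
  rw [mem_dimg]
  unfold SS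
  simp only [Set.mem_union, Set.mem_Ico, h1]
  constructor
  · rintro (⟨u1, u2⟩ | ⟨u1, u2⟩)
    · left; constructor <;> nlinarith
    · right; constructor <;> nlinarith
  · rintro (⟨u1, u2⟩ | ⟨u1, u2⟩)
    · left; constructor <;> nlinarith
    · right; constructor <;> nlinarith

lemma SS_disjoint {m n : ℤ} (h : m ≠ n) : dimg m SS ∩ dimg n SS = ∅ := by
  have pi_pos := Real.pi_pos
  ext x
  simp only [Set.mem_inter_iff, Set.mem_empty_iff_false, iff_false, not_and]
  intro hm hn
  rw [mem_dimg_SS] at hm hn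
  rcases lt_or_gt_of_ne h with hlt | hlt
  all_goals {
    first
    | (have hle : (2:ℝ) ^ (m+1) ≤ (2:ℝ) ^ n :=
        zpow_le_zpow_right₀ one_le_two (by omega)
       have ham : (0:ℝ) < (2:ℝ) ^ m := zpow_pos two_pos m
       have han : (0:ℝ) < (2:ℝ) ^ n := zpow_pos two_pos n
       rcases hm with ⟨a1, a2⟩ | ⟨a1, a2⟩ <;> rcases hn with ⟨b1, b2⟩ | ⟨b1, b2⟩ <;> nlinarith)
    | (have hle : (2:ℝ) ^ (n+1) ≤ (2:ℝ) ^ m :=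
        zpow_le_zpow_right₀ one_le_two (by omega)
       have ham : (0:ℝ) < (2:ℝ) ^ m := zpow_pos two_pos m
       have han : (0:ℝ) < (2:ℝ) ^ n := zpow_pos two_pos n
       rcases hm with ⟨a1, a2⟩ | ⟨a1, a2⟩ <;> rcases hn with ⟨b1, b2⟩ | ⟨b1, b2⟩ <;> nlinarith)
  }

lemma SS_cover {x : ℝ} (hx : x ≠ 0) : ∃ n : ℤ, x ∈ dimg n SS := by
  have pi_pos := Real.pi_pos
  rcases lt_or_gt_of_ne hx with hneg | hpos
  · obtain ⟨n, h1, h2⟩ := exists_mem_Ioc_zpow (x := -x / π) (y := (2:ℝ))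
      (div_pos (by linarith) pi_pos) one_lt_two
    refine ⟨n, ?_⟩
    rw [mem_dimg_SS]
    left
    rw [lt_div_iff₀ pi_pos] at h1
    rw [div_le_iff₀ pi_pos] at h2
    constructor <;> nlinarith
  · obtain ⟨n, h1, h2⟩ := exists_mem_Ico_zpow (x := x / π) (y := (2:ℝ))
      (div_pos (by linarith) pi_pos) one_lt_two
    refine ⟨n, ?_⟩
    rw [mem_dimg_SS]
    right
    rw [le_div_iff₀ pi_pos] at h1
    rw [div_lt_iff₀ pi_pos] at h2
    constructor <;> nlinarith

lemma aux_null {A B : Set ℝ} (hA : volume (A \ SS) = 0) (hB : volume (B \ SS) = 0)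
    {a b : ℤ} (hab : a ≠ b) : volume (dimg a A ∩ dimg b B) = 0 := by
  have hsub : dimg a A ∩ dimg b B ⊆
      (dimg a (A \ SS) ∪ dimg b (B \ SS)) ∪ (dimg a SS ∩ dimg b SS) := by
    rintro x ⟨hxa, hxb⟩
    rw [mem_dimg] at hxa hxb
    by_cases h1 : (2:ℝ)^(-a) * x ∈ SS
    · by_cases h2 : (2:ℝ)^(-b) * x ∈ SS
      · exact Or.inr ⟨mem_dimg.mpr h1, mem_dimg.mpr h2⟩
      · exact Or.inl (Or.inr (mem_dimg.mpr ⟨hxb, h2⟩))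
    · exact Or.inl (Or.inl (mem_dimg.mpr ⟨hxa, h1⟩))
  apply measure_mono_null hsub
  refine measure_union_null (measure_union_null ?_ ?_) ?_
  · exact volume_dimg_zero hA a
  · exact volume_dimg_zero hB b
  · rw [SS_disjoint hab]; exact measure_empty

end Helpers

/-- A measurable set G ⊆ ℝ is a 2-dilation generator of a partition of ℝ iff it is, modulo
null sets, dilation congruent modulo 2 to [−2π, −π) ∪ [π, 2π). -/
theorem dilation_generator_iff_congruent_shannon (G : Set ℝ) (hG : MeasurableSet G) :
    ((∀ m n : ℤ, m ≠ n →
        volume (((fun x => (2 : ℝ) ^ m * x) '' G) ∩ ((fun x => (2 : ℝ) ^ n * x) '' G)) = 0) ∧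
      volume (Set.univ \ ⋃ n : ℤ, (fun x => (2 : ℝ) ^ n * x) '' G) = 0)
    ↔ DilCongr2 G (Set.Ico (-(2 * Real.pi)) (-Real.pi) ∪ Set.Ico Real.pi (2 * Real.pi)) := by
  have hSSeq : (Set.Ico (-(2 * Real.pi)) (-Real.pi) ∪ Set.Ico Real.pi (2 * Real.pi)) = SS := rfl
  rw [hSSeq]
  constructor
  · rintro ⟨hdisj, hcov⟩
    refine ⟨fun n => G ∩ dimg (-n) SS, ⟨?_, ?_, ?_⟩, ?_, ?_, ?_⟩
    · exact fun n => hG.inter (measurableSet_dimg measurableSet_SS _)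
    · intro m n hmn
      apply measure_mono_null (t := dimg (-m) SS ∩ dimg (-n) SS)
      · rintro x ⟨hx1, hx2⟩; exact ⟨hx1.2, hx2.2⟩
      · rw [SS_disjoint (show (-m : ℤ) ≠ -n by omega)]; exact measure_empty
    · rw [symmDiff_def]
      refine measure_union_null ?_ ?_
      · rw [Set.diff_eq_empty.mpr (Set.iUnion_subset fun n => Set.inter_subset_left)]
        exact measure_empty
      · apply measure_mono_null (t := {(0:ℝ)})
        · rintro x ⟨hxG, hxU⟩
          simp only [Set.mem_singleton_iff]
          by_contra hx0
          obtain ⟨k, hk⟩ := SS_cover hx0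
          exact hxU (Set.mem_iUnion.mpr ⟨-k, ⟨hxG, by simpa using hk⟩⟩)
        · exact measure_singleton 0
    all_goals {
      have hQeq : ∀ n : ℤ, (fun x => (2:ℝ) ^ n * x) '' (G ∩ dimg (-n) SS) = dimg n G ∩ SS := by
        intro n
        show dimg n (G ∩ dimg (-n) SS) = _
        rw [dimg_inter, dimg_dimg]
        simp [dimg_zero]
      simp only [hQeq]
      first
      | exact fun n => (measurableSet_dimg hG n).inter measurableSet_SS
      | (intro m n hmn
         apply measure_mono_null (t := dimg m G ∩ dimg n G)
         · rintro x ⟨hx1, hx2⟩; exact ⟨hx1.1, hx2.1⟩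
         · exact hdisj m n hmn)
      | (rw [symmDiff_def]
         refine measure_union_null ?_ ?_
         · rw [Set.diff_eq_empty.mpr (Set.iUnion_subset fun n => Set.inter_subset_right)]
           exact measure_empty
         · apply measure_mono_null (t := Set.univ \ ⋃ n : ℤ, dimg n G)
           · rintro x ⟨hxS, hxU⟩
             refine ⟨trivial, fun hx => ?_⟩
             obtain ⟨n, hn⟩ := Set.mem_iUnion.mp hx
             exact hxU (Set.mem_iUnion.mpr ⟨n, ⟨hn, hxS⟩⟩)
           · exact hcov)
    }
  · rintro ⟨P, ⟨hPm, hPd, hPs⟩, hQm, hQd, hQs⟩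
    set Q : ℤ → Set ℝ := fun n => dimg n (P n) with hQdef
    have hQd' : ∀ m n : ℤ, m ≠ n → volume (Q m ∩ Q n) = 0 := hQd
    have hQs' : volume (symmDiff (⋃ n, Q n) SS) = 0 := hQs
    have hGdP : volume (G \ ⋃ n, P n) = 0 :=
      measure_mono_null (by rw [symmDiff_def]; exact Set.subset_union_right) hPs
    have hPdG : volume ((⋃ n, P n) \ G) = 0 :=
      measure_mono_null (by rw [symmDiff_def]; exact Set.subset_union_left) hPs
    have hPkG : ∀ k, volume (P k \ G) = 0 := fun k =>
      measure_mono_null (Set.diff_subset_diff (Set.subset_iUnion P k) Set.Subset.rfl) hPdG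
    have hSdQ : volume (SS \ ⋃ n, Q n) = 0 :=
      measure_mono_null (by rw [symmDiff_def]; exact Set.subset_union_right) hQs'
    have hQkS : ∀ k, volume (Q k \ SS) = 0 := fun k =>
      measure_mono_null
        (Set.Subset.trans (Set.diff_subset_diff (Set.subset_iUnion Q k) Set.Subset.rfl)
          (by rw [symmDiff_def]; exact Set.subset_union_left)) hQs'
    constructor
    · intro m n hmn
      show volume (dimg m G ∩ dimg n G) = 0
      have hsub : dimg m G ∩ dimg n G ⊆
          (dimg m (G \ ⋃ k, P k) ∪ dimg n (G \ ⋃ k, P k)) ∪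
            ⋃ k : ℤ, ⋃ l : ℤ, (dimg m (P k) ∩ dimg n (P l)) := by
        rintro x ⟨hxm, hxn⟩
        rw [mem_dimg] at hxm hxn
        by_cases h1 : (2:ℝ)^(-m) * x ∈ ⋃ k, P k
        · by_cases h2 : (2:ℝ)^(-n) * x ∈ ⋃ k, P k
          · obtain ⟨k, hk⟩ := Set.mem_iUnion.mp h1
            obtain ⟨l, hl⟩ := Set.mem_iUnion.mp h2
            exact Or.inr (Set.mem_iUnion.mpr ⟨k, Set.mem_iUnion.mpr
              ⟨l, ⟨mem_dimg.mpr hk, mem_dimg.mpr hl⟩⟩⟩)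
          · exact Or.inl (Or.inr (mem_dimg.mpr ⟨hxn, h2⟩))
        · exact Or.inl (Or.inl (mem_dimg.mpr ⟨hxm, h1⟩))
      apply measure_mono_null hsub
      refine measure_union_null (measure_union_null ?_ ?_) ?_
      · exact volume_dimg_zero hGdP m
      · exact volume_dimg_zero hGdP n
      · refine measure_iUnion_null fun k => measure_iUnion_null fun l => ?_
        have hmk : dimg m (P k) = dimg (m - k) (Q k) := by
          simp only [hQdef]; rw [dimg_dimg, show m - k + k = m by omega]
        have hnl : dimg n (P l) = dimg (n - l) (Q l) := by
          simp only [hQdef]; rw [dimg_dimg, show n - l + l = n by omega]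
        rw [hmk, hnl]
        rcases eq_or_ne (m - k) (n - l) with heq | hne
        · have hkl : k ≠ l := by omega
          rw [← heq, ← dimg_inter]
          exact volume_dimg_zero (hQd' k l hkl) _
        · exact aux_null (hQkS k) (hQkS l) hne
    · show volume (Set.univ \ ⋃ n : ℤ, dimg n G) = 0
      have hsub : Set.univ \ (⋃ n : ℤ, dimg n G) ⊆
          ({(0:ℝ)} ∪ ⋃ j : ℤ, dimg j (SS \ ⋃ k, Q k)) ∪
            ⋃ j : ℤ, ⋃ k : ℤ, dimg (j + k) (P k \ G) := by
        rintro x ⟨-, hxU⟩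
        by_cases hx0 : x = 0
        · exact Or.inl (Or.inl hx0)
        obtain ⟨j, hj⟩ := SS_cover hx0
        rw [mem_dimg] at hj
        by_cases h1 : (2:ℝ)^(-j) * x ∈ ⋃ k, Q k
        · obtain ⟨k, hk⟩ := Set.mem_iUnion.mp h1
          rw [hQdef, mem_dimg] at hk
          have hmem : (2:ℝ)^(-(j+k)) * x ∈ P k := by
            have : (2:ℝ)^(-(j+k)) * x = (2:ℝ)^(-k) * ((2:ℝ)^(-j) * x) := by
              rw [show (-(j+k) : ℤ) = -k + -j by omega,
                zpow_add₀ (two_ne_zero (α := ℝ)), mul_assoc]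
            rw [this]; exact hk
          by_cases h2 : (2:ℝ)^(-(j+k)) * x ∈ G
          · exact absurd (Set.mem_iUnion.mpr ⟨j + k, mem_dimg.mpr h2⟩) hxU
          · exact Or.inr (Set.mem_iUnion.mpr ⟨j, Set.mem_iUnion.mpr
              ⟨k, mem_dimg.mpr ⟨hmem, h2⟩⟩⟩)
        · exact Or.inl (Or.inr (Set.mem_iUnion.mpr ⟨j, mem_dimg.mpr ⟨hj, h1⟩⟩))
      apply measure_mono_null hsub
      refine measure_union_null (measure_union_null ?_ ?_) ?_
      · exact measure_singleton 0
      · exact measure_iUnion_null fun j => volume_dimg_zero hSdQ j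
      · exact measure_iUnion_null fun j => measure_iUnion_null fun k =>
          volume_dimg_zero (hPkG k) _
end

section
/- If E ⊆ ℝ is measurable and there exists k ∈ ℤ, k ≠ 0, with m(E ∩ (E + 2πk)) > 0, then the restricted exponentials {e^{iℓs}|_E : ℓ ∈ ℤ} do not span a dense subspace of L²(E); explicitly, the function h = χ_{E₁} − χ_{E₂}, with E₁ = E ∩ (E + 2πk) and E₂ = E₁ − 2πk, is a nonzero element of L²(E) orthogonal to every e^{iℓs}|_E. -/
open MeasureTheory Set
open scoped ENNReal

lemma null_of_ae_add (S : Set ℝ) (hS : MeasurableSet S) (τ : ℝ) (hτ : 0 < τ)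
    (hfin : volume S < ⊤) (heq : S =ᵐ[volume] ((· + (-τ)) ⁻¹' S)) : volume S = 0 := by
  set g : ℤ → ℝ≥0∞ := fun n => volume (S ∩ Ico ((n:ℝ) * τ) (((n:ℝ) + 1) * τ)) with hg
  have hstep : ∀ n : ℤ, g (n + 1) = g n := by
    intro n
    have h1 : ((S ∩ Ico (((n:ℝ)+1) * τ) (((n:ℝ)+1+1) * τ) : Set ℝ)) =ᵐ[volume]
        ((((· + (-τ)) ⁻¹' S) ∩ Ico (((n:ℝ)+1) * τ) (((n:ℝ)+1+1) * τ) : Set ℝ)) :=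
      heq.inter (Filter.EventuallyEq.refl _ _)
    have h2 : ((· + (-τ)) ⁻¹' S) ∩ Ico (((n:ℝ)+1) * τ) (((n:ℝ)+1+1) * τ)
        = (· + (-τ)) ⁻¹' (S ∩ Ico ((n:ℝ) * τ) (((n:ℝ)+1) * τ)) := by
      ext x
      simp only [mem_inter_iff, mem_preimage, mem_Ico]
      constructor
      · rintro ⟨hx, h3, h4⟩; exact ⟨hx, by linarith, by linarith⟩
      · rintro ⟨hx, h3, h4⟩; exact ⟨hx, by linarith, by linarith⟩
    calc g (n+1) = volume (((· + (-τ)) ⁻¹' S) ∩ Ico (((n:ℝ)+1) * τ) (((n:ℝ)+1+1) * τ)) := by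
            refine measure_congr ?_
            convert h1 using 3 <;> push_cast <;> ring_nf
      _ = volume ((· + (-τ)) ⁻¹' (S ∩ Ico ((n:ℝ) * τ) (((n:ℝ)+1) * τ))) := by rw [h2]
      _ = g n := by rw [measure_preimage_add_right]
  have hconst : ∀ n : ℤ, g n = g 0 := by
    intro n
    induction n using Int.induction_on with
    | zero => rfl
    | succ m ih => rw [hstep m, ih]
    | pred m ih => rw [← ih, ← hstep (-m - 1)]; ring_nf
  have hcover : S = ⋃ n : ℤ, S ∩ Ico ((n:ℝ) * τ) (((n:ℝ)+1) * τ) := by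
    ext x
    simp only [mem_iUnion, mem_inter_iff, mem_Ico]
    constructor
    · intro hx
      refine ⟨⌊x / τ⌋, hx, ?_, ?_⟩
      · rw [← le_div_iff₀ hτ]; exact Int.floor_le _
      · rw [← div_lt_iff₀ hτ]; exact Int.lt_floor_add_one _
    · rintro ⟨n, hx, _⟩; exact hx
  have hdisj : Pairwise (Function.onFun Disjoint
      (fun n : ℤ => S ∩ Ico ((n:ℝ) * τ) (((n:ℝ)+1) * τ))) := by
    intro a b hab
    rw [Function.onFun, Set.disjoint_left]
    rintro x ⟨-, h1, h2⟩ ⟨-, h3, h4⟩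
    rcases lt_or_gt_of_ne hab with h | h
    · have : (a:ℝ) + 1 ≤ (b:ℝ) := by exact_mod_cast h
      nlinarith
    · have : (b:ℝ) + 1 ≤ (a:ℝ) := by exact_mod_cast h
      nlinarith
  have hsum : volume S = ∑' n : ℤ, g n := by
    conv_lhs => rw [hcover]
    rw [measure_iUnion hdisj (fun n => hS.inter measurableSet_Ico)]
  by_cases h0 : g 0 = 0
  · rw [hsum]
    simp [hconst, h0]
  · exfalso
    rw [hsum] at hfin
    have : ∑' n : ℤ, g n = ⊤ := by
      calc ∑' n : ℤ, g n = ∑' _ : ℤ, g 0 := tsum_congr hconst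
        _ = ⊤ := ENNReal.tsum_const_eq_top_of_ne_zero h0
    simp [this] at hfin

/-- If E has positive-measure overlap with its translate E + 2πk (k ≠ 0), then
h = χ_{E₁} − χ_{E₂}, with E₁ = E ∩ (E + 2πk) and E₂ = E₁ − 2πk, is a nonzero element of
L²(E) orthogonal to every restricted exponential e^{iℓs}|_E; in particular the restricted
exponentials do not span a dense subspace of L²(E). -/
theorem indicator_difference_orthogonal_to_exponentials
    (E : Set ℝ) (hE : MeasurableSet E) (hfin : volume E < ⊤) (k : ℤ) (hk : k ≠ 0)
    (hpos : 0 < volume (E ∩ ((fun x => x + 2 * Real.pi * k) '' E))) :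
    let E₁ : Set ℝ := E ∩ ((fun x => x + 2 * Real.pi * k) '' E)
    let E₂ : Set ℝ := (fun x => x - 2 * Real.pi * k) '' E₁
    let h : ℝ → ℂ := fun x => Set.indicator E₁ 1 x - Set.indicator E₂ 1 x
    ¬ (h =ᵐ[volume.restrict E] 0) ∧
      ∀ ℓ : ℤ, ∫ s in E, h s * (starRingEnd ℂ) (Complex.exp (Complex.I * ℓ * s)) = 0 := by
  classical
  intro E₁ E₂ h
  set t : ℝ := 2 * Real.pi * k with ht_def
  have ht : t ≠ 0 := by
    simp only [ht_def]
    have := Real.pi_pos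
    have : (k:ℝ) ≠ 0 := Int.cast_ne_zero.mpr hk
    positivity
  -- basic set facts
  have himg : (fun x => x + t) '' E = (fun x => x - t) ⁻¹' E := by
    ext x; simp only [mem_image, mem_preimage]
    constructor
    · rintro ⟨y, hy, rfl⟩; simpa using hy
    · intro hx; exact ⟨x - t, hx, by ring⟩
  have hE₁meas : MeasurableSet E₁ := by
    rw [show E₁ = E ∩ ((fun x => x + t) '' E) from rfl, himg]
    exact hE.inter ((measurable_sub_const t) hE)
  have hE₂eq : E₂ = (fun x => x + t) ⁻¹' E₁ := by
    ext x; simp only [E₂, mem_image, mem_preimage]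
    constructor
    · rintro ⟨y, hy, rfl⟩; simpa [ht_def] using hy
    · intro hx; exact ⟨x + t, hx, by ring⟩
  have hE₂meas : MeasurableSet E₂ := by
    rw [hE₂eq]; exact (measurable_add_const t) hE₁meas
  have hE₁E : E₁ ⊆ E := inter_subset_left
  have hE₂E : E₂ ⊆ E := by
    intro x hx
    rw [hE₂eq] at hx
    have hx2 : x + t ∈ (fun x => x + t) '' E := hx.2
    rw [himg] at hx2
    simpa using hx2
  constructor
  · -- nonvanishing
    intro habs
    have hae : ∀ᵐ x ∂volume, x ∈ E → h x = 0 := (ae_restrict_iff' hE).mp habs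
    have hall : ∀ᵐ x ∂volume, h x = 0 := by
      filter_upwards [hae] with x hx
      by_cases hxE : x ∈ E
      · exact hx hxE
      · have h1 : x ∉ E₁ := fun hc => hxE (hE₁E hc)
        have h2 : x ∉ E₂ := fun hc => hxE (hE₂E hc)
        simp [h, Set.indicator_of_notMem h1, Set.indicator_of_notMem h2]
    have haeeq : E₁ =ᵐ[volume] E₂ := by
      rw [Filter.eventuallyEq_set]
      filter_upwards [hall] with x hx
      simp only [h, sub_eq_zero] at hx
      constructor
      · intro h1
        by_contra h2
        rw [Set.indicator_of_mem h1, Set.indicator_of_notMem h2] at hx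
        simp at hx
      · intro h2
        by_contra h1
        rw [Set.indicator_of_notMem h1, Set.indicator_of_mem h2] at hx
        simp at hx
    rw [hE₂eq] at haeeq
    have key : volume E₁ = 0 := by
      rcases lt_or_gt_of_ne ht with htneg | htpos
      · refine null_of_ae_add E₁ hE₁meas (-t) (by linarith)
          (lt_of_le_of_lt (measure_mono hE₁E) hfin) ?_
        simpa using haeeq
      · refine null_of_ae_add E₁ hE₁meas t htpos
          (lt_of_le_of_lt (measure_mono hE₁E) hfin) ?_
        have hqmp : Measure.QuasiMeasurePreserving (fun x : ℝ => x + (-t)) volume volume :=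
          (measurePreserving_add_right volume (-t)).quasiMeasurePreserving
        have := hqmp.preimage_ae_eq haeeq
        have hid : (fun x : ℝ => x + (-t)) ⁻¹' ((fun x => x + t) ⁻¹' E₁) = E₁ := by
          ext x; simp
        rw [hid] at this
        exact this.symm
    exact absurd key (ne_of_gt hpos)
  · -- orthogonality
    intro ℓ
    set c : ℝ → ℂ := fun s => Complex.exp (-(Complex.I * ℓ * s)) with hc
    have hconj : ∀ s : ℝ, (starRingEnd ℂ) (Complex.exp (Complex.I * ℓ * s)) = c s := by
      intro s; rw [← Complex.exp_conj]; congr 1; simp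
    have hcmeas : Measurable c := by
      apply Complex.measurable_exp.comp
      fun_prop
    have hint : ∀ (A : Set ℝ), MeasurableSet A → A ⊆ E → Integrable (A.indicator c) := by
      intro A hA hAE
      rw [integrable_indicator_iff hA]
      refine Measure.integrableOn_of_bounded (M := 1)
        (ne_top_of_le_ne_top hfin.ne (measure_mono hAE)) hcmeas.aestronglyMeasurable ?_
      filter_upwards with x
      simp only [hc, Complex.norm_exp]
      have : (-(Complex.I * ℓ * x)).re = 0 := by simp
      rw [this, Real.exp_zero]
    have hsplit : ∀ s : ℝ, h s * (starRingEnd ℂ) (Complex.exp (Complex.I * ℓ * s))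
        = E₁.indicator c s - E₂.indicator c s := by
      intro s
      rw [hconj]
      simp only [h, Set.indicator]
      split_ifs <;> simp
    simp only [hsplit]
    rw [← integral_indicator hE]
    have hsupp : E.indicator (fun s => E₁.indicator c s - E₂.indicator c s)
        = fun s => E₁.indicator c s - E₂.indicator c s := by
      ext s
      rw [Set.indicator_apply]
      split_ifs with hs
      · rfl
      · rw [Set.indicator_of_notMem (fun hc' => hs (hE₁E hc')),
          Set.indicator_of_notMem (fun hc' => hs (hE₂E hc'))]
        simp
    rw [hsupp, integral_sub (hint E₁ hE₁meas hE₁E) (hint E₂ hE₂meas hE₂E), sub_eq_zero]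
    -- change of variables on E₂
    have hcper : ∀ x : ℝ, c (x + t) = c x := by
      intro x
      simp only [hc]
      have h1 : -(Complex.I * ℓ * ((x + t : ℝ) : ℂ)) = -(Complex.I * ℓ * (x:ℝ))
          + (-(ℓ * k) : ℤ) * (2 * Real.pi * Complex.I) := by
        push_cast [ht_def]
        ring
      rw [h1, Complex.exp_add, Complex.exp_int_mul_two_pi_mul_I, mul_one]
    have hkey : ∀ x : ℝ, E₂.indicator c x = E₁.indicator c (x + t) := by
      intro x
      rw [hE₂eq]
      simp only [Set.indicator_apply, mem_preimage]
      split_ifs with hx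
      · exact (hcper x).symm
      · rfl
    calc ∫ x, E₁.indicator c x = ∫ x, E₁.indicator c (x + t) :=
          (integral_add_right_eq_self (E₁.indicator c) t).symm
      _ = ∫ x, E₂.indicator c x := by simp only [hkey]
end

section
/- Let 𝒟 be the group of dilations by powers of an expansive matrix A on ℝ^n and 𝒯 the group of translations by vectors 2πk, k ∈ ℤ^n. Then (𝒟, 𝒯) is an abstract dilation–translation pair: (1) for each bounded set E and each open set F bounded away from 0 there exist ℓ ∈ ℕ and k ∈ ℤ^n such that E + 2πk ⊆ A^ℓ F; (2) 0 is a fixed point of 𝒟 such that for every neighborhood N of 0 and every bounded set E there is ℓ with A^{-ℓ} E ⊆ N. -/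
open Filter Topology

open scoped Matrix.Norms.L2Operator
open Polynomial

lemma aux_mem_spectrum_iff_isRoot {N : ℕ} (M : Matrix (Fin N) (Fin N) ℂ) (μ : ℂ) :
    μ ∈ spectrum ℂ M ↔ M.charpoly.IsRoot μ := by
  rw [spectrum.mem_iff, Polynomial.IsRoot, Matrix.charpoly, _root_.eval_det,
    Matrix.matPolyEquiv_charmatrix, eval_sub, eval_X, eval_C]
  rw [Matrix.isUnit_iff_isUnit_det, isUnit_iff_ne_zero, not_not]
  congr! 2

lemma aux_norm_le {N : ℕ} (M : Matrix (Fin N) (Fin N) ℝ) (x : EuclideanSpace ℝ (Fin N)) :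
    ‖Matrix.toEuclideanLin M x‖ ≤ ‖M.map Complex.ofReal‖ * ‖x‖ := by
  set xc : EuclideanSpace ℂ (Fin N) :=
    (WithLp.equiv 2 (Fin N → ℂ)).symm (fun i => (x i : ℂ)) with hxcdef
  have hxc : ‖xc‖ = ‖x‖ := by
    simp [EuclideanSpace.norm_eq, hxcdef]
  have key : (M.map Complex.ofReal).mulVec ((WithLp.equiv 2 (Fin N → ℂ)) xc)
      = fun i => ((M.mulVec ((WithLp.equiv 2 (Fin N → ℝ)) x)) i : ℂ) := by
    funext i
    have := (RingHom.map_mulVec Complex.ofRealHom M (fun j => x j) i).symm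
    exact this
  have h1 : ‖Matrix.toEuclideanLin M x‖
      = ‖Matrix.toEuclideanLin (M.map Complex.ofReal) xc‖ := by
    rw [Matrix.toEuclideanLin_apply, Matrix.toEuclideanLin_apply]
    erw [key]
    simp [EuclideanSpace.norm_eq]
  rw [h1, ← hxc]
  have h2 := Matrix.l2_opNorm_mulVec (M.map Complex.ofReal) xc
  rw [Matrix.toEuclideanLin_apply]
  exact h2

lemma aux_small {N : ℕ} (A : Matrix (Fin N) (Fin N) ℝ) (hA : IsUnit A)
    (heig : ∀ μ : ℂ, (Matrix.charpoly (A.map Complex.ofReal)).IsRoot μ → 1 < ‖μ‖)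
    (ε : ℝ) (hε : 0 < ε) : ∃ ℓ : ℕ, ‖((A⁻¹) ^ ℓ).map Complex.ofReal‖ < ε := by
  rcases Nat.eq_zero_or_pos N with hN | hN
  · subst hN
    refine ⟨0, ?_⟩
    have : (((A⁻¹) ^ 0).map Complex.ofReal) = 0 := Subsingleton.elim _ 0
    rw [this, norm_zero]; exact hε
  haveI : Nonempty (Fin N) := Fin.pos_iff_nonempty.mp hN
  have hdet : IsUnit A.det := (Matrix.isUnit_iff_isUnit_det A).mp hA
  set Ac : Matrix (Fin N) (Fin N) ℂ := A.map Complex.ofReal with hAc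
  set B : Matrix (Fin N) (Fin N) ℂ := (A⁻¹).map Complex.ofReal with hB
  have hmap : ∀ M : Matrix (Fin N) (Fin N) ℝ,
      M.map Complex.ofReal = Complex.ofRealHom.mapMatrix M := fun _ => rfl
  have hAB : Ac * B = 1 := by
    rw [hAc, hB, hmap, hmap, ← map_mul, Matrix.mul_nonsing_inv A hdet, map_one]
  have hBA : B * Ac = 1 := by
    rw [hAc, hB, hmap, hmap, ← map_mul, Matrix.nonsing_inv_mul A hdet, map_one]
  set u : (Matrix (Fin N) (Fin N) ℂ)ˣ := ⟨Ac, B, hAB, hBA⟩ with hu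
  have hspec : ∀ z ∈ spectrum ℂ B, ‖z‖₊ < 1 := by
    intro z hz
    have hz0 : z ≠ 0 := by
      rintro rfl
      exact (spectrum.zero_mem_iff (R := ℂ)).mp hz (Units.isUnit ⟨B, Ac, hBA, hAB⟩)
    have hzinv : z⁻¹ ∈ spectrum ℂ Ac := by
      have := (spectrum.inv_mem_iff (R := ℂ) (r := Units.mk0 z hz0) (a := u⁻¹)).mp hz
      exact this
    have hroot := (aux_mem_spectrum_iff_isRoot Ac z⁻¹).mp hzinv
    have h1 := heig _ hroot
    rw [norm_inv] at h1
    have hzabs : ‖z‖ < 1 := by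
      by_contra h
      push_neg at h
      have : ‖z‖⁻¹ ≤ 1 := inv_le_one_of_one_le₀ h
      linarith
    simpa [← NNReal.coe_lt_coe] using hzabs
  have hρ : spectralRadius ℂ B < 1 := by
    have := spectrum.spectralRadius_lt_of_forall_lt B (r := 1) hspec
    simpa using this
  obtain ⟨r, hr1, hr2⟩ := exists_between hρ
  have htend := spectrum.pow_nnnorm_pow_one_div_tendsto_nhds_spectralRadius B
  have hev1 : ∀ᶠ ℓ : ℕ in atTop, (‖B ^ ℓ‖₊ : ENNReal) ^ (1 / (ℓ : ℝ)) < r :=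
    htend.eventually_lt_const hr1
  have hev2 : ∀ᶠ ℓ : ℕ in atTop, r ^ ℓ < ENNReal.ofReal ε := by
    have h0 : (0 : ENNReal) < ENNReal.ofReal ε := ENNReal.ofReal_pos.mpr hε
    exact (ENNReal.tendsto_pow_atTop_nhds_zero_of_lt_one hr2).eventually_lt_const h0
  have hev3 : ∀ᶠ ℓ : ℕ in atTop, 1 ≤ ℓ := eventually_ge_atTop 1
  obtain ⟨ℓ, h1, h2, h3⟩ := (hev1.and (hev2.and hev3)).exists
  refine ⟨ℓ, ?_⟩
  have hℓ : (ℓ : ℝ) ≠ 0 := by positivity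
  have hx : (‖B ^ ℓ‖₊ : ENNReal) < r ^ ℓ := by
    have h5 := ENNReal.rpow_lt_rpow h1 (z := (ℓ : ℝ)) (by positivity)
    rw [← ENNReal.rpow_mul, one_div, inv_mul_cancel₀ hℓ, ENNReal.rpow_one,
      ENNReal.rpow_natCast] at h5
    exact h5
  have h4 : (‖B ^ ℓ‖₊ : ENNReal) < ENNReal.ofReal ε := hx.trans h2
  rw [← ENNReal.ofReal_coe_nnreal, coe_nnnorm] at h4
  have h6 : ‖B ^ ℓ‖ < ε := by
    by_contra h
    push_neg at h
    exact absurd (ENNReal.ofReal_le_ofReal h) (not_le.mpr h4)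
  have heq : ((A⁻¹) ^ ℓ).map Complex.ofReal = B ^ ℓ := by
    rw [hmap, map_pow, hB, hmap]
  rw [heq]
  exact h6

lemma aux_comp {N : ℕ} (M M' : Matrix (Fin N) (Fin N) ℝ) (v : EuclideanSpace ℝ (Fin N)) :
    Matrix.toEuclideanLin M (Matrix.toEuclideanLin M' v)
      = Matrix.toEuclideanLin (M * M') v := by
  simp [Matrix.toEuclideanLin_apply, Matrix.mulVec_mulVec]

lemma aux_one {N : ℕ} (v : EuclideanSpace ℝ (Fin N)) :
    Matrix.toEuclideanLin (1 : Matrix (Fin N) (Fin N) ℝ) v = v := by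
  simp [Matrix.toEuclideanLin_apply]

/-- The dilations by powers of an expansive matrix A together with the translations by
2πℤⁿ form an abstract dilation–translation pair: (1) for every bounded set E and every
nonempty open set F bounded away from 0 there are ℓ ∈ ℕ and k ∈ ℤⁿ with E + 2πk ⊆ A^ℓ F;
(2) 0 is a fixed point for the dilations, and for every neighborhood N of 0 and bounded E
there is ℓ with A^{-ℓ} E ⊆ N. -/
theorem dilation_translation_pair
    {n : ℕ} (A : Matrix (Fin n) (Fin n) ℝ) (hA : IsUnit A)
    (heig : ∀ μ : ℂ, (Matrix.charpoly (A.map Complex.ofReal)).IsRoot μ → 1 < ‖μ‖) :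
    (∀ E F : Set (EuclideanSpace ℝ (Fin n)), Bornology.IsBounded E → IsOpen F →
      F.Nonempty → (∃ ε > (0 : ℝ), ∀ x ∈ F, ε ≤ ‖x‖) →
      ∃ (ℓ : ℕ) (k : Fin n → ℤ),
        (fun x : EuclideanSpace ℝ (Fin n) =>
          x + (WithLp.equiv 2 (Fin n → ℝ)).symm (fun i => 2 * Real.pi * (k i))) '' E ⊆
          Matrix.toEuclideanLin (A ^ ℓ) '' F) ∧
    ((∀ ℓ : ℕ, Matrix.toEuclideanLin (A ^ ℓ) (0 : EuclideanSpace ℝ (Fin n)) = 0) ∧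
      ∀ N ∈ 𝓝 (0 : EuclideanSpace ℝ (Fin n)), ∀ E : Set (EuclideanSpace ℝ (Fin n)),
        Bornology.IsBounded E → ∃ ℓ : ℕ, Matrix.toEuclideanLin (A⁻¹ ^ ℓ) '' E ⊆ N) := by
  have hdet : IsUnit A.det := (Matrix.isUnit_iff_isUnit_det A).mp hA
  have hAAinv : A * A⁻¹ = 1 := Matrix.mul_nonsing_inv A hdet
  have hAinvA : A⁻¹ * A = 1 := Matrix.nonsing_inv_mul A hdet
  have hcomm : Commute A A⁻¹ := by
    unfold Commute SemiconjBy
    rw [hAAinv, hAinvA]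
  have hpow1 : ∀ ℓ : ℕ, A ^ ℓ * A⁻¹ ^ ℓ = 1 := fun ℓ => by
    rw [← hcomm.mul_pow, hAAinv, one_pow]
  have hpow2 : ∀ ℓ : ℕ, A⁻¹ ^ ℓ * A ^ ℓ = 1 := fun ℓ => by
    rw [← hcomm.symm.mul_pow, hAinvA, one_pow]
  constructor
  · -- part 1
    intro E F hE hF hFne _
    obtain ⟨y, hyF⟩ := hFne
    obtain ⟨r, hr, hball⟩ := Metric.isOpen_iff.mp hF y hyF
    obtain ⟨R, hR0, hRE⟩ := hE.subset_closedBall_lt 0 0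
    set Cn : ℝ := Real.sqrt n * Real.pi with hCn
    have hCn0 : 0 ≤ Cn := mul_nonneg (Real.sqrt_nonneg _) Real.pi_pos.le
    have hden : (0:ℝ) < R + Cn + 1 := by linarith
    have hε0 : (0:ℝ) < r / (R + Cn + 1) := div_pos hr hden
    obtain ⟨ℓ, hℓ⟩ := aux_small A hA heig _ hε0
    set T := Matrix.toEuclideanLin ((A⁻¹) ^ ℓ) with hT
    set S := Matrix.toEuclideanLin (A ^ ℓ) with hS
    have hTle : ∀ z : EuclideanSpace ℝ (Fin n), ‖T z‖ ≤ (r / (R + Cn + 1)) * ‖z‖ := by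
      intro z
      exact (aux_norm_le _ z).trans
        (mul_le_mul_of_nonneg_right hℓ.le (norm_nonneg z))
    set c : EuclideanSpace ℝ (Fin n) := S y with hc
    set k : Fin n → ℤ := fun i => round (c i / (2 * Real.pi)) with hk
    refine ⟨ℓ, k, ?_⟩
    set t : EuclideanSpace ℝ (Fin n) :=
      (WithLp.equiv 2 (Fin n → ℝ)).symm (fun i => 2 * Real.pi * (k i)) with ht
    have hcomp : ∀ i, ‖(t - c) i‖ ≤ Real.pi := by
      intro i
      have h2π : (0:ℝ) < 2 * Real.pi := by positivity
      have hrd := abs_sub_round (c i / (2 * Real.pi))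
      have hti : (t - c) i = 2 * Real.pi * (k i) - c i := by
        simp [ht, PiLp.sub_apply, WithLp.equiv_symm_apply]
      rw [hti, Real.norm_eq_abs]
      have : 2 * Real.pi * (k i) - c i
          = -((2 * Real.pi) * (c i / (2 * Real.pi) - (round (c i / (2 * Real.pi)) : ℝ))) := by
        have h2ne : (2 * Real.pi) ≠ 0 := by positivity
        field_simp [hk]
        simp only [hk]
        ring
      rw [this, abs_neg, abs_mul, abs_of_pos h2π]
      calc 2 * Real.pi * |c i / (2 * Real.pi) - (round (c i / (2 * Real.pi)) : ℝ)|
          ≤ 2 * Real.pi * (1/2) := by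
            exact mul_le_mul_of_nonneg_left hrd h2π.le
        _ = Real.pi := by ring
    have htc : ‖t - c‖ ≤ Cn := by
      rw [EuclideanSpace.norm_eq]
      have hsum : ∑ i, ‖(t - c) i‖ ^ 2 ≤ (n : ℝ) * Real.pi ^ 2 := by
        calc ∑ i, ‖(t - c) i‖ ^ 2 ≤ ∑ _i : Fin n, Real.pi ^ 2 :=
              Finset.sum_le_sum fun i _ =>
                pow_le_pow_left₀ (norm_nonneg _) (hcomp i) 2
          _ = (n : ℝ) * Real.pi ^ 2 := by
              simp [Finset.sum_const, Finset.card_univ]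
      calc Real.sqrt (∑ i, ‖(t - c) i‖ ^ 2) ≤ Real.sqrt ((n : ℝ) * Real.pi ^ 2) :=
            Real.sqrt_le_sqrt hsum
        _ = Cn := by
            rw [hCn, Real.sqrt_mul (by positivity), Real.sqrt_sq Real.pi_pos.le]
    rintro _ ⟨x, hx, rfl⟩
    have hxR : ‖x‖ ≤ R := by
      have := hRE hx
      simpa [Metric.mem_closedBall, dist_zero_right] using this
    set w : EuclideanSpace ℝ (Fin n) := T (x + t) with hw
    have hTc : T c = y := by
      rw [hc, hS, hT, aux_comp, hpow2, aux_one]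
    have hwy : ‖w - y‖ < r := by
      have h1 : w - y = T (x + t - c) := by
        rw [hw, ← hTc, ← map_sub]
      rw [h1]
      have h2 : ‖x + t - c‖ ≤ R + Cn := by
        calc ‖x + t - c‖ = ‖x + (t - c)‖ := by rw [add_sub_assoc]
          _ ≤ ‖x‖ + ‖t - c‖ := norm_add_le _ _
          _ ≤ R + Cn := add_le_add hxR htc
      calc ‖T (x + t - c)‖ ≤ (r / (R + Cn + 1)) * ‖x + t - c‖ := hTle _
        _ ≤ (r / (R + Cn + 1)) * (R + Cn) :=
            mul_le_mul_of_nonneg_left h2 hε0.le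
        _ < r := by
            rw [div_mul_eq_mul_div, div_lt_iff₀ hden]
            nlinarith
    have hwF : w ∈ F := hball (by simpa [Metric.mem_ball, dist_eq_norm] using hwy)
    refine ⟨w, hwF, ?_⟩
    show Matrix.toEuclideanLin (A ^ ℓ) (T (x + t)) = x + t
    rw [hT, aux_comp, hpow1, aux_one]
  · constructor
    · intro ℓ; exact map_zero _
    · intro Nb hNb E hE
      obtain ⟨ε, hε, hball⟩ := Metric.mem_nhds_iff.mp hNb
      obtain ⟨R, hR0, hRE⟩ := hE.subset_closedBall_lt 0 0
      have hε0 : (0:ℝ) < ε / (2 * R) := by positivity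
      obtain ⟨ℓ, hℓ⟩ := aux_small A hA heig _ hε0
      refine ⟨ℓ, ?_⟩
      rintro _ ⟨x, hx, rfl⟩
      have hxR : ‖x‖ ≤ R := by
        have := hRE hx
        simpa [Metric.mem_closedBall, dist_zero_right] using this
      apply hball
      have h1 : ‖Matrix.toEuclideanLin (A⁻¹ ^ ℓ) x‖ ≤ (ε / (2 * R)) * R := by
        calc ‖Matrix.toEuclideanLin (A⁻¹ ^ ℓ) x‖
            ≤ ‖((A⁻¹) ^ ℓ).map Complex.ofReal‖ * ‖x‖ := aux_norm_le _ _
          _ ≤ (ε / (2 * R)) * R := by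
              apply mul_le_mul hℓ.le hxR (norm_nonneg _) hε0.le
      have h2 : (ε / (2 * R)) * R = ε / 2 := by field_simp
      rw [h2] at h1
      have : ‖Matrix.toEuclideanLin (A⁻¹ ^ ℓ) x‖ < ε := by linarith
      simpa [Metric.mem_ball, dist_zero_right] using this
end
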